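/- For every gravity vector g ∈ ℝ³ and arbitrary estimated values R̂_I ∈ ℝ^{3×3}, v̂, p̂_I, p̂_f, p̂_G ∈ ℝ³, the invariant-EKF error-propagation matrix A of the perfect augmented system satisfies A N = 0, where N is the constant 24×4 unobservable-direction matrix; consequently exp(δ A) N = N for every δ ∈ ℝ. -/

import Mathlib

open Matrix

abbrev V3 := Fin 3 → ℝ
abbrev M3 := Matrix (Fin 3) (Fin 3) ℝ

/-- The cross-product (skew-symmetric) matrix `(a)_×`. -/
def skew (a : V3) : M3 :=
  !![0, -a 2, a 1; a 2, 0, -a 0; -a 1, a 0, 0]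

/-- Row/column index of the 24-dimensional right-invariant error
`(ξ_θ, ξ_v, ξ_p, ξ_pf, ξ_pG, ξ_θG, ξ_bg, ξ_ba)`: 8 blocks of 3. -/
abbrev Idx24 := Fin 8 × Fin 3

/-- 24×24 matrix from an 8×8 table of 3×3 blocks. -/
def bm8 (f : Fin 8 → Fin 8 → M3) : Matrix Idx24 Idx24 ℝ :=
  Matrix.of fun p q => f p.1 q.1 p.2 q.2

/-- The invariant-EKF error-propagation matrix `A` of the perfect augmented system. -/
def Amat (g : V3) (RI : M3) (v pI pf pG : V3) : Matrix Idx24 Idx24 ℝ :=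
  bm8 ![![0, 0, 0, 0, 0, 0, -RI, 0],
        ![skew g, 0, 0, 0, 0, 0, -(skew v * RI), -RI],
        ![0, 1, 0, 0, 0, 0, -(skew pI * RI), 0],
        ![0, 0, 0, 0, 0, 0, -(skew pf * RI), 0],
        ![0, 0, 0, 0, 0, 0, -(skew pG * RI), 0],
        ![0, 0, 0, 0, 0, 0, 0, 0],
        ![0, 0, 0, 0, 0, 0, 0, 0],
        ![0, 0, 0, 0, 0, 0, 0, 0]]

/-- The constant 24×4 unobservable-direction matrix `N`: first column plus a 24×3 block. -/
def Nmat (g : V3) : Matrix Idx24 (Fin 1 ⊕ Fin 3) ℝ :=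
  Matrix.of fun p j =>
    Sum.elim (fun _ => (![g, 0, 0, 0, 0, g, 0, 0] : Fin 8 → V3) p.1 p.2)
      (fun c => (![0, 0, 1, 1, 1, 0, 0, 0] : Fin 8 → M3) p.1 p.2 c) j

/-- A 2×24 measurement Jacobian `B ⬝ [f₀ ⋯ f₇]` from a 2×3 factor `B`
and an 8-tuple of 3×3 blocks. -/
def rowJac (B : Matrix (Fin 2) (Fin 3) ℝ) (f : Fin 8 → M3) : Matrix (Fin 2) Idx24 ℝ :=
  Matrix.of fun r p => (B * f p.1) r p.2


section ExpLemma
variable {n m : Type*} [Fintype n] [DecidableEq n] [Fintype m]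
attribute [local instance] Matrix.linftyOpNormedRing Matrix.linftyOpNormedAlgebra

lemma matrix_exp_mul_eq_self (X : Matrix n n ℝ) (Y : Matrix n m ℝ) (h : X * Y = 0) :
    NormedSpace.exp X * Y = Y := by
  classical
  let L0 : Matrix n n ℝ →ₗ[ℝ] Matrix n m ℝ :=
    { toFun := fun Z => Z * Y
      map_add' := fun a b => Matrix.add_mul a b Y
      map_smul' := fun c a => Matrix.smul_mul c a Y }
  let L : Matrix n n ℝ →L[ℝ] Matrix n m ℝ := L0.toContinuousLinearMap
  have hs := NormedSpace.expSeries_summable' (𝕂 := ℝ) X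
  have hL : NormedSpace.exp X * Y = L (NormedSpace.exp X) := rfl
  rw [hL, NormedSpace.exp_eq_tsum (𝕂 := ℝ), L.map_tsum hs]
  have hterm : ∀ k : ℕ, L ((k.factorial : ℝ)⁻¹ • X ^ k) = if k = 0 then Y else 0 := by
    intro k
    cases k with
    | zero => simp [L, L0]
    | succ j =>
      show ((j+1).factorial  : ℝ)⁻¹ • X ^ (j+1) * Y = _
      simp only [Nat.succ_ne_zero, if_false, pow_succ, Matrix.smul_mul, Matrix.mul_assoc, h,
        Matrix.mul_zero, smul_zero]
  calc (∑' k : ℕ, L ((k.factorial : ℝ)⁻¹ • X ^ k))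
      = ∑' k : ℕ, if k = 0 then Y else 0 := tsum_congr hterm
    _ = Y := by rw [tsum_eq_single 0 (fun b hb => by simp [hb])]; simp

end ExpLemma

section
variable {X : Type*} (x0 x1 x2 x3 x4 x5 x6 x7 : X)
lemma v8_0 : ![x0,x1,x2,x3,x4,x5,x6,x7] (0:Fin 8) = x0 := rfl
lemma v8_1 : ![x0,x1,x2,x3,x4,x5,x6,x7] (1:Fin 8) = x1 := rfl
lemma v8_2 : ![x0,x1,x2,x3,x4,x5,x6,x7] (2:Fin 8) = x2 := rfl
lemma v8_3 : ![x0,x1,x2,x3,x4,x5,x6,x7] (3:Fin 8) = x3 := rfl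
lemma v8_4 : ![x0,x1,x2,x3,x4,x5,x6,x7] (4:Fin 8) = x4 := rfl
lemma v8_5 : ![x0,x1,x2,x3,x4,x5,x6,x7] (5:Fin 8) = x5 := rfl
lemma v8_6 : ![x0,x1,x2,x3,x4,x5,x6,x7] (6:Fin 8) = x6 := rfl
lemma v8_7 : ![x0,x1,x2,x3,x4,x5,x6,x7] (7:Fin 8) = x7 := rfl
end

section
variable {X : Type*} (x y : X)
lemma w5 : vecCons x (fun i : Fin 7 => vecCons y (fun _ : Fin 6 => x) i) (5:Fin 8) = x := rfl
lemma w6 : vecCons x (fun i : Fin 7 => vecCons y (fun _ : Fin 6 => x) i) (6:Fin 8) = x := rfl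
lemma w7 : vecCons x (fun i : Fin 7 => vecCons y (fun _ : Fin 6 => x) i) (7:Fin 8) = x := rfl
end

def Nblk (g : V3) : Fin 8 → Matrix (Fin 3) (Fin 1 ⊕ Fin 3) ℝ := fun b =>
  Matrix.of fun r j =>
    Sum.elim (fun _ => (![g, 0, 0, 0, 0, g, 0, 0] : Fin 8 → V3) b r)
      (fun c => (![0, 0, 1, 1, 1, 0, 0, 0] : Fin 8 → M3) b r c) j

lemma Nmat_eq_blk (g : V3) : Nmat g = Matrix.of fun p j => Nblk g p.1 p.2 j := rfl

lemma bm8_mul {κ : Type*} [Fintype κ] (f : Fin 8 → Fin 8 → M3)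
    (Y : Fin 8 → Matrix (Fin 3) κ ℝ) :
    bm8 f * (Matrix.of fun p j => Y p.1 p.2 j : Matrix Idx24 κ ℝ) =
      Matrix.of fun p j => (∑ b, f p.1 b * Y b) p.2 j := by
  ext ⟨i, k⟩ j
  simp [bm8, Matrix.mul_apply, Fintype.sum_prod_type, Matrix.sum_apply]

def Ng (g : V3) : Matrix (Fin 3) (Fin 1 ⊕ Fin 3) ℝ :=
  Matrix.of fun r j => Sum.elim (fun _ => g r) (fun _ => 0) j

lemma Nblk_zero (g : V3) : Nblk g 1 = 0 ∧ Nblk g 6 = 0 ∧ Nblk g 7 = 0 := by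
  refine ⟨?_, ?_, ?_⟩ <;>
    (ext r j;
     simp only [Nblk, Matrix.of_apply, v8_1, v8_6, v8_7];
     rcases j with j | j <;> simp)

lemma Nblk_g (g : V3) : Nblk g 0 = Ng g ∧ Nblk g 5 = Ng g := by
  constructor <;>
    (ext r j;
     simp only [Nblk, Ng, Matrix.of_apply, v8_0, v8_5];
     rcases j with j | j <;> simp)

lemma skew_mul_Ng (g : V3) : skew g * Ng g = 0 := by
  ext r j
  rcases j with j | j <;> fin_cases r <;>
    simp [skew, Ng, Matrix.mul_apply, Fin.sum_univ_three] <;> ring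

lemma AN_zero (g : V3) (RI : M3) (v pI pf pG : V3) :
    Amat g RI v pI pf pG * Nmat g = 0 := by
  rw [Nmat_eq_blk, Amat, bm8_mul]
  obtain ⟨h1, h6, h7⟩ := Nblk_zero g
  obtain ⟨h0, h5⟩ := Nblk_g g
  ext ⟨i, k⟩ j
  fin_cases i <;>
    (simp only [Matrix.of_apply, Matrix.zero_apply, Fin.sum_univ_eight,
       v8_0, v8_1, v8_2, v8_3, v8_4, v8_5, v8_6, v8_7,
       h1, h6, h7, h0, h5, skew_mul_Ng, Matrix.mul_zero, Matrix.zero_mul,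
       Matrix.one_mul, Matrix.neg_mul, Matrix.add_apply, Matrix.neg_apply,
       neg_zero, add_zero, zero_add];
     simp [v8_0, v8_1, v8_2, v8_3, v8_4, v8_5, v8_6, v8_7,
       h1, h6, h7, h0, h5, skew_mul_Ng, Matrix.vecHead, Matrix.vecTail, w5, w6, w7])

/-- The propagation matrix of the perfect augmented system annihilates the
unobservable directions, hence the state transition fixes them. -/
theorem Amat_annihilates_N (g : V3) (RI : M3) (v pI pf pG : V3) :
    Amat g RI v pI pf pG * Nmat g = 0 ∧
    ∀ δ : ℝ, NormedSpace.exp (δ • Amat g RI v pI pf pG) * Nmat g = Nmat g := by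
  have h0 : Amat g RI v pI pf pG * Nmat g = 0 := AN_zero g RI v pI pf pG
  refine ⟨h0, fun δ => ?_⟩
  apply matrix_exp_mul_eq_self
  rw [Matrix.smul_mul, h0, smul_zero]
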